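/- Let V > 0 and V_max ≥ V be reals, set d = (V_max − V)/V_max, and assume d ≤ d_max. If the investment I ∈ ℝ satisfies −((d_max − d)/((1 − d)·X_max))·V ≤ I ≤ ((d_max − d)/((1 − d)·|X_min|))·V, then for every return x ∈ [X_min, X_max], setting V' = V + I·x and V_max' = max(V_max, V'), the updated drawdown d' = (V_max' − V')/V_max' satisfies d' ≤ d_max. -/

import Mathlib

theorem one_step_drawdown_sufficiency
    (Xmin Xmax dmax V Vm I : ℝ)
    (hXmin1 : -1 < Xmin) (hXmin0 : Xmin < 0) (hXmax : 0 < Xmax)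
    (hdmax0 : 0 < dmax) (hdmax1 : dmax < 1)
    (hV : 0 < V) (hVm : V ≤ Vm)
    (d : ℝ) (hd_def : d = (Vm - V) / Vm)
    (hd : d ≤ dmax)
    (hIlo : -((dmax - d) / ((1 - d) * Xmax)) * V ≤ I)
    (hIhi : I ≤ ((dmax - d) / ((1 - d) * |Xmin|)) * V) :
    ∀ x : ℝ, Xmin ≤ x → x ≤ Xmax →
      (max Vm (V + I * x) - (V + I * x)) / max Vm (V + I * x) ≤ dmax := by
  intro x hx1 hx2
  have hVm0 : 0 < Vm := lt_of_lt_of_le hV hVm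
  have hdlt : d < 1 := by
    rw [hd_def, div_lt_one hVm0]; linarith
  have h1d : 0 < 1 - d := by linarith
  have hVeq : V = (1 - d) * Vm := by
    rw [hd_def]; field_simp; ring
  have habs : |Xmin| = -Xmin := abs_of_neg hXmin0
  have hA : 0 < (1 - d) * (-Xmin) := mul_pos h1d (by linarith)
  have hB : 0 < (1 - d) * Xmax := mul_pos h1d hXmax
  -- rewrite the two bounds on I
  have hhi : I * ((1 - d) * (-Xmin)) ≤ (dmax - d) * V := by
    rw [habs] at hIhi
    have : I ≤ (dmax - d) * V / ((1 - d) * (-Xmin)) := by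
      rw [div_mul_eq_mul_div] at hIhi; exact hIhi
    exact (le_div_iff₀ hA).mp this
  have hlo : -((dmax - d) * V) ≤ I * ((1 - d) * Xmax) := by
    have : -((dmax - d) * V) / ((1 - d) * Xmax) ≤ I := by
      have e : -((dmax - d) / ((1 - d) * Xmax)) * V
          = -((dmax - d) * V) / ((1 - d) * Xmax) := by ring
      rw [e] at hIlo; exact hIlo
    exact (div_le_iff₀ hB).mp this
  have hc : 0 ≤ dmax - d := by linarith
  have hkey : -((dmax - d) * Vm) ≤ I * x := by
    rcases le_or_gt 0 I with hI | hI
    · have h1 : I * Xmin ≤ I * x := mul_le_mul_of_nonneg_left hx1 hI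
      nlinarith [mul_pos h1d hVm0]
    · have h1 : I * Xmax ≤ I * x := by
        have := mul_le_mul_of_nonpos_left hx2 (le_of_lt hI)
        linarith
      nlinarith [mul_pos h1d hVm0]
  have hV' : (1 - dmax) * Vm ≤ V + I * x := by nlinarith
  have hV'pos : 0 < V + I * x := by nlinarith
  rcases le_total (V + I * x) Vm with h | h
  · rw [max_eq_left h, div_le_iff₀ hVm0]
    nlinarith
  · rw [max_eq_right h]
    have : (V + I * x - (V + I * x)) / (V + I * x) = 0 := by
      simp
    rw [this]; linarith
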